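/- Let k be a field of characteristic p > 0 and let f ∈ k[x] be a monic, irreducible, inseparable polynomial. Write f(x) = f_sep(x^{p^e}) where f_sep ∈ k[x] is separable and e ≥ 1, and let r_1, …, r_s ∈ k̄ be the (distinct) roots of f_sep. Then tol(f) = ∏_{1≤i<j≤s} (r_i − r_j)^{2p^e} = disc(f_sep)^{p^e}. -/

import Mathlib

open Polynomial
open scoped Classical

/-- The tolerant of a polynomial `f` over a field `K` (intended: `K` an algebraic closure and
`f` the image of a polynomial over a subfield): writing `f = a_n ∏ (X - r_i)^{m_i}` with
`r_1, …, r_s` distinct, `tol f = a_n^{2n-2} ∏_{i<j} (r_i - r_j)^{2 m_i m_j}`.  The product is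
taken over unordered pairs of distinct roots; this is well defined since the exponents are even. -/
noncomputable def tol {K : Type*} [Field K] (f : K[X]) : K :=
  f.leadingCoeff ^ (2 * (f.natDegree : ℤ) - 2) *
    ∏ p ∈ f.roots.toFinset.sym2.filter (fun p => ¬ p.IsDiag),
      Sym2.lift ⟨fun a b => ((a - b) ^ 2) ^ (f.rootMultiplicity a * f.rootMultiplicity b),
        fun a b => by
          dsimp only
          rw [mul_comm (rootMultiplicity a f), show (a - b) ^ 2 = (b - a) ^ 2 by ring]⟩ p

/-- The discriminant of `g`: with roots `α_1, …, α_m ∈ K` listed with multiplicity,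
`disc g = lc(g)^{2m-2} ∏_{i<j} (α_i - α_j)^2` (well defined: the factors are symmetric). -/
noncomputable def disc {K : Type*} [Field K] (g : K[X]) : K :=
  g.leadingCoeff ^ (2 * (g.natDegree : ℤ) - 2) *
    ∏ ij ∈ Finset.univ.filter
        (fun ij : Fin g.roots.toList.length × Fin g.roots.toList.length => ij.1 < ij.2),
      (g.roots.toList.get ij.1 - g.roots.toList.get ij.2) ^ 2

lemma aux_prod {K : Type*} [Field K] {n : ℕ} (v : Fin n → K) (hv : Function.Injective v)
    (g : K → K → K) (hg : ∀ a b, g a b = g b a) :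
    ∏ q ∈ (Finset.univ.image v).sym2.filter (fun q => ¬ q.IsDiag),
        Sym2.lift ⟨g, hg⟩ q
      = ∏ ij ∈ Finset.univ.filter (fun ij : Fin n × Fin n => ij.1 < ij.2),
          g (v ij.1) (v ij.2) := by
  symm
  refine Finset.prod_bij (fun (ij : Fin n × Fin n) _ => Sym2.mk (v ij.1) (v ij.2)) ?_ ?_ ?_ ?_
  · rintro ⟨i, j⟩ hij
    simp only [Finset.mem_filter] at hij ⊢
    constructor
    · rw [Finset.mk_mem_sym2_iff]
      exact ⟨Finset.mem_image_of_mem v (Finset.mem_univ _),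
        Finset.mem_image_of_mem v (Finset.mem_univ _)⟩
    · simp only [Sym2.isDiag_iff_proj_eq]
      exact fun h => absurd (hv h) (ne_of_lt hij.2)
  · rintro ⟨i, j⟩ hij ⟨i', j'⟩ hij' h
    simp only [Finset.mem_filter, Finset.mem_univ, true_and] at hij hij'
    replace h := (Sym2.mk_eq_mk_iff (p := (v i, v j)) (q := (v i', v j'))).mp h
    rcases h with h | h
    · simp only [Prod.mk.injEq, Prod.ext_iff] at h ⊢
      exact ⟨hv h.1, hv h.2⟩
    · simp only [Prod.swap_prod_mk, Prod.mk.injEq] at h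
      have h1 := hv h.1; have h2 := hv h.2
      subst h1; subst h2
      exact absurd hij (not_lt_of_gt hij')
  · intro z hz
    simp only [Finset.mem_filter] at hz
    obtain ⟨⟨a, b⟩, rfl⟩ := z.exists_rep
    have ha : a ∈ Finset.univ.image v := (Finset.mk_mem_sym2_iff.mp hz.1).1
    have hb : b ∈ Finset.univ.image v := (Finset.mk_mem_sym2_iff.mp hz.1).2
    obtain ⟨i, -, rfl⟩ := Finset.mem_image.mp ha
    obtain ⟨j, -, rfl⟩ := Finset.mem_image.mp hb
    have hne : i ≠ j := by
      rintro rfl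
      exact hz.2 (by simp [Sym2.isDiag_iff_proj_eq])
    rcases lt_or_gt_of_ne hne with h | h
    · exact ⟨(i, j), Finset.mem_filter.mpr ⟨Finset.mem_univ _, h⟩, rfl⟩
    · exact ⟨(j, i), Finset.mem_filter.mpr ⟨Finset.mem_univ _, h⟩, Sym2.eq_swap⟩
  · rintro ⟨i, j⟩ hij
    simp [Sym2.lift_mk]

/-- Lemma (inseparable irreducible polynomials): over a field `k` of characteristic `p > 0`,
let `f` be monic, irreducible and inseparable, written `f(x) = f_sep(x^{p^e})` with `f_sep`
separable and `e ≥ 1`, and let `r_1, …, r_s` be the (distinct) roots of `f_sep` in the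
algebraic closure.  Then `tol f = ∏_{i<j} (r_i - r_j)^{2 p^e} = disc(f_sep)^{p^e}`. -/
theorem tol_of_inseparable_irreducible {k : Type*} [Field k] (p : ℕ) [Fact p.Prime] [CharP k p]
    (f fsep : k[X]) (hmonic : f.Monic) (hirr : Irreducible f) (hinsep : ¬ f.Separable)
    (e : ℕ) (he : 1 ≤ e) (hsep : fsep.Separable) (hf : f = fsep.comp (X ^ p ^ e))
    (s : ℕ) (r : Fin s → AlgebraicClosure k) (hr : Function.Injective r)
    (hroots : fsep.map (algebraMap k (AlgebraicClosure k)) = ∏ i, (X - C (r i))) :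
    tol (f.map (algebraMap k (AlgebraicClosure k))) =
        ∏ ij ∈ Finset.univ.filter (fun ij : Fin s × Fin s => ij.1 < ij.2),
          (r ij.1 - r ij.2) ^ (2 * p ^ e) ∧
      tol (f.map (algebraMap k (AlgebraicClosure k))) =
        disc (fsep.map (algebraMap k (AlgebraicClosure k))) ^ p ^ e := by
  choose ρ hρq using fun i => show ∃ y : AlgebraicClosure k, y ^ p ^ e = r i from
    ⟨(iterateFrobeniusEquiv (AlgebraicClosure k) p e).symm (r i), by
      have := (iterateFrobeniusEquiv (AlgebraicClosure k) p e).apply_symm_apply (r i)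
      rwa [iterateFrobeniusEquiv_def] at this⟩
  have hq0 : p ^ e ≠ 0 := pow_ne_zero e (Fact.out : p.Prime).ne_zero
  have hρinj : Function.Injective ρ := fun i j h => hr (by rw [← hρq i, ← hρq j, h])
  set F := f.map (algebraMap k (AlgebraicClosure k)) with hFdef
  have hFmonic : F.Monic := hmonic.map _
  have hFfact : F = ∏ i, (X - C (ρ i)) ^ p ^ e := by
    rw [hFdef, hf, Polynomial.map_comp, hroots, Polynomial.map_pow, map_X,
      Polynomial.prod_comp]
    refine Finset.prod_congr rfl fun i _ => ?_
    rw [sub_comp, X_comp, C_comp, sub_pow_char_pow, ← C_pow, hρq]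
  have hFroots : F.roots = (p ^ e) • (Finset.univ.val.map ρ) := by
    rw [hFfact, Finset.prod_pow, roots_pow]
    congr 1
    rw [show (∏ i, (X - C (ρ i))) = ((Finset.univ.val.map ρ).map fun a => X - C a).prod by
      rw [Multiset.map_map]; rfl, roots_multiset_prod_X_sub_C]
  have hFtoFinset : F.roots.toFinset = Finset.univ.image ρ := by
    rw [hFroots, Multiset.toFinset_nsmul _ _ hq0, Multiset.toFinset_map, Finset.val_toFinset]
  have hFmult : ∀ a ∈ Finset.univ.image ρ, F.rootMultiplicity a = p ^ e := by
    intro a ha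
    obtain ⟨i, -, rfl⟩ := Finset.mem_image.mp ha
    rw [← count_roots, hFroots, Multiset.count_nsmul,
      Multiset.count_map_eq_count' ρ _ hρinj,
      Multiset.count_eq_one_of_mem Finset.univ.nodup (Finset.mem_univ i), mul_one]
  -- the tol computation
  have htol : tol F = ∏ ij ∈ Finset.univ.filter (fun ij : Fin s × Fin s => ij.1 < ij.2),
      (r ij.1 - r ij.2) ^ (2 * p ^ e) := by
    have hsymm : ∀ a b : AlgebraicClosure k,
        ((a - b) ^ 2) ^ (p ^ e * p ^ e) = ((b - a) ^ 2) ^ (p ^ e * p ^ e) := by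
      intro a b; rw [show (a - b) ^ 2 = (b - a) ^ 2 by ring]
    rw [tol, hFmonic.leadingCoeff, one_zpow, one_mul, hFtoFinset]
    rw [show (∏ z ∈ (Finset.univ.image ρ).sym2.filter (fun z => ¬ z.IsDiag),
        Sym2.lift ⟨fun a b => ((a - b) ^ 2) ^ (F.rootMultiplicity a * F.rootMultiplicity b),
          fun a b => by
            dsimp only
            rw [mul_comm (rootMultiplicity a F), show (a - b) ^ 2 = (b - a) ^ 2 by ring]⟩ z)
      = ∏ z ∈ (Finset.univ.image ρ).sym2.filter (fun z => ¬ z.IsDiag),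
        Sym2.lift ⟨fun a b => ((a - b) ^ 2) ^ (p ^ e * p ^ e), hsymm⟩ z from ?_]
    · rw [aux_prod ρ hρinj _ hsymm]
      refine Finset.prod_congr rfl fun ij hij => ?_
      rw [← pow_mul, ← hρq ij.1, ← hρq ij.2, ← sub_pow_char_pow, ← pow_mul]
      ring_nf
    · refine Finset.prod_congr rfl fun z hz => ?_
      simp only [Finset.mem_filter] at hz
      obtain ⟨⟨a, b⟩, rfl⟩ := z.exists_rep
      have ha := (Finset.mk_mem_sym2_iff.mp hz.1).1
      have hb := (Finset.mk_mem_sym2_iff.mp hz.1).2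
      simp only [Sym2.lift_mk, hFmult a ha, hFmult b hb]
  -- the disc computation
  set G := fsep.map (algebraMap k (AlgebraicClosure k)) with hGdef
  have hGmonic : G.Monic := by
    rw [hroots]
    exact monic_prod_of_monic _ _ fun i _ => monic_X_sub_C _
  have hGroots : G.roots = Finset.univ.val.map r := by
    rw [hroots,
      show (∏ i, (X - C (r i))) = ((Finset.univ.val.map r).map fun a => X - C a).prod by
        rw [Multiset.map_map]; rfl, roots_multiset_prod_X_sub_C]
  have hGnodup : G.roots.toList.Nodup := by
    have h1 : (G.roots.toList : Multiset (AlgebraicClosure k)).Nodup := by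
      rw [Multiset.coe_toList, hGroots]
      exact Multiset.Nodup.map hr Finset.univ.nodup
    exact Multiset.coe_nodup.mp h1
  have hget : Function.Injective (G.roots.toList.get) :=
    List.nodup_iff_injective_get.mp hGnodup
  have himg : Finset.univ.image (G.roots.toList.get) = Finset.univ.image r := by
    ext a
    simp only [Finset.mem_image, Finset.mem_univ, true_and]
    rw [show (∃ i, G.roots.toList.get i = a) ↔ a ∈ G.roots.toList from
      ⟨fun ⟨i, hi⟩ => hi ▸ List.get_mem _ i, fun h => (List.mem_iff_get.mp h)⟩]
    rw [← Multiset.mem_coe, Multiset.coe_toList, hGroots]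
    simp [List.mem_ofFn, eq_comm]
  have hsymm2 : ∀ a b : AlgebraicClosure k, (a - b) ^ 2 = (b - a) ^ 2 := fun a b => by ring
  have hdisc : disc G = ∏ ij ∈ Finset.univ.filter (fun ij : Fin s × Fin s => ij.1 < ij.2),
      (r ij.1 - r ij.2) ^ 2 := by
    rw [disc, hGmonic.leadingCoeff, one_zpow, one_mul,
      ← aux_prod (G.roots.toList.get) hget _ hsymm2, himg,
      aux_prod r hr _ hsymm2]
  refine ⟨htol, ?_⟩
  rw [htol, hdisc, ← Finset.prod_pow]
  exact Finset.prod_congr rfl fun ij _ => by rw [← pow_mul]
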